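/- Let φ ∈ 𝒮(ℝ^N), ‖φ‖ = 1, and ψ ∈ 𝒮(ℝ^N). The intertwining relations (x_j/2 + iħ ∂/∂p_j) U_φψ = U_φ(x_j ψ) and (p_j/2 − iħ ∂/∂x_j) U_φψ = U_φ(−iħ ∂ψ/∂x_j) hold for 1 ≤ j ≤ N. -/

import Mathlib

open MeasureTheory Complex Real

/-- The Wigner wave-packet transform `U_φ`. -/
noncomputable def wavePacket (N : ℕ) (ℏ : ℝ) (φ ψ : (Fin N → ℝ) → ℂ)
    (x p : Fin N → ℝ) : ℂ :=
  ((2 * Real.pi * ℏ) ^ (-(N : ℝ) / 2) : ℝ) *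
    Complex.exp (Complex.I * (∑ i, p i * x i) / (2 * ℏ)) *
    ∫ x' : Fin N → ℝ,
      Complex.exp (-Complex.I * (∑ i, p i * x' i) / ℏ) * ψ x' * φ (x - x')

noncomputable def ePhase (r : ℝ) : ℂ := Complex.exp (r * Complex.I)

lemma norm_ePhase (r : ℝ) : ‖ePhase r‖ = 1 := by
  rw [ePhase]; exact Complex.norm_exp_ofReal_mul_I r

lemma ePhase_add (r s : ℝ) : ePhase (r + s) = ePhase r * ePhase s := by
  rw [ePhase, ePhase, ePhase, ← Complex.exp_add]; congr 1; push_cast; ring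

lemma ePhase_hasDerivAt {g : ℝ → ℝ} {g' : ℝ} {s : ℝ} (h : HasDerivAt g g' s) :
    HasDerivAt (fun t => ePhase (g t)) ((g' : ℂ) * Complex.I * ePhase (g s)) s := by
  have := ((h.ofReal_comp).mul_const Complex.I).cexp
  simpa [ePhase, mul_comm] using this

lemma continuous_ePhase_comp {α : Type*} [TopologicalSpace α] {g : α → ℝ} (hg : Continuous g) :
    Continuous fun t => ePhase (g t) :=
  Complex.continuous_exp.comp ((Complex.continuous_ofReal.comp hg).mul continuous_const)

lemma sum_update_mul_left {N : ℕ} (g y : Fin N → ℝ) (j : Fin N) (s : ℝ) :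
    ∑ i, Function.update g j s i * y i = s * y j + ∑ i ∈ Finset.univ \ {j}, g i * y i := by
  have h : ∀ i ∈ Finset.univ, Function.update g j s i * y i
      = Function.update (fun i => g i * y i) j (s * y j) i := by
    intro i _
    rcases eq_or_ne i j with rfl | hij
    · simp
    · simp [Function.update_of_ne hij]
  rw [Finset.sum_congr rfl h, Finset.sum_update_of_mem (Finset.mem_univ j)]

lemma sum_mul_update {N : ℕ} (g y : Fin N → ℝ) (j : Fin N) (s : ℝ) :
    ∑ i, y i * Function.update g j s i = y j * s + ∑ i ∈ Finset.univ \ {j}, y i * g i := by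
  have h : ∀ i ∈ Finset.univ, y i * Function.update g j s i
      = Function.update (fun i => y i * g i) j (y j * s) i := by
    intro i _
    rcases eq_or_ne i j with rfl | hij
    · simp
    · simp [Function.update_of_ne hij]
  rw [Finset.sum_congr rfl h, Finset.sum_update_of_mem (Finset.mem_univ j)]

lemma wavePacket_eq {N : ℕ} (ℏ : ℝ) (φ ψ : (Fin N → ℝ) → ℂ) (x p : Fin N → ℝ) :
    wavePacket N ℏ φ ψ x p =
      (((2 * Real.pi * ℏ) ^ (-(N : ℝ) / 2) : ℝ) : ℂ) *
        ePhase ((∑ i, p i * x i) / (2 * ℏ)) *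
        ∫ x', ePhase (-(∑ i, p i * x' i) / ℏ) * ψ x' * φ (x - x') := by
  unfold wavePacket ePhase
  have h1 : Complex.I * ((∑ i, p i * x i : ℝ) : ℂ) / (2 * (ℏ : ℂ))
      = (((∑ i, p i * x i) / (2 * ℏ) : ℝ) : ℂ) * Complex.I := by push_cast; ring
  have h2 : ∀ x' : Fin N → ℝ, -Complex.I * ((∑ i, p i * x' i : ℝ) : ℂ) / (ℏ : ℂ)
      = ((-(∑ i, p i * x' i) / ℏ : ℝ) : ℂ) * Complex.I := by intro x'; push_cast; ring
  simp only [h1, h2]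

lemma wavePacket_eq_conv {N : ℕ} {ℏ : ℝ} (hℏ : ℏ ≠ 0) (φ ψ : (Fin N → ℝ) → ℂ)
    (x p : Fin N → ℝ) :
    wavePacket N ℏ φ ψ x p =
      (((2 * Real.pi * ℏ) ^ (-(N : ℝ) / 2) : ℝ) : ℂ) *
        ePhase (-(∑ i, p i * x i) / (2 * ℏ)) *
        ∫ u, ePhase ((∑ i, p i * u i) / ℏ) * ψ (x - u) * φ u := by
  rw [wavePacket_eq]
  have key : (∫ x', ePhase (-(∑ i, p i * x' i) / ℏ) * ψ x' * φ (x - x'))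
      = ePhase (-(∑ i, p i * x i) / ℏ) *
          ∫ u, ePhase ((∑ i, p i * u i) / ℏ) * ψ (x - u) * φ u := by
    calc (∫ x', ePhase (-(∑ i, p i * x' i) / ℏ) * ψ x' * φ (x - x'))
        = ∫ x', ePhase (-(∑ i, p i * (x - (x - x')) i) / ℏ) * ψ (x - (x - x')) * φ (x - x') := by
          simp [sub_sub_cancel]
      _ = ∫ y, ePhase (-(∑ i, p i * (x - y) i) / ℏ) * ψ (x - y) * φ y :=
          integral_sub_left_eq_self
            (fun y => ePhase (-(∑ i, p i * (x - y) i) / ℏ) * ψ (x - y) * φ y) volume x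
      _ = ∫ y, ePhase (-(∑ i, p i * x i) / ℏ) *
            (ePhase ((∑ i, p i * y i) / ℏ) * ψ (x - y) * φ y) := by
          congr 1; funext y
          have h : -(∑ i, p i * (x - y) i) / ℏ
              = -(∑ i, p i * x i) / ℏ + (∑ i, p i * y i) / ℏ := by
            simp only [Pi.sub_apply, mul_sub, Finset.sum_sub_distrib]
            ring
          rw [h, ePhase_add]; ring
      _ = _ := integral_const_mul _ _
  rw [key]
  have h2 : ePhase ((∑ i, p i * x i) / (2 * ℏ)) * ePhase (-(∑ i, p i * x i) / ℏ)
      = ePhase (-(∑ i, p i * x i) / (2 * ℏ)) := by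
    rw [← ePhase_add]; congr 1; field_simp; ring
  rw [← h2]; ring

lemma hasDerivAt_update' {N : ℕ} (x : Fin N → ℝ) (j : Fin N) (s : ℝ) :
    HasDerivAt (fun t : ℝ => Function.update x j t) (Pi.single j 1) s := by
  have h : (fun t : ℝ => Function.update x j t)
      = fun t => Function.update x j 0 + t • (Pi.single j 1 : Fin N → ℝ) := by
    funext t i
    rcases eq_or_ne i j with rfl | hij
    · simp
    · simp [Function.update_of_ne hij, Pi.single_eq_of_ne hij]
  rw [h]
  simpa using ((hasDerivAt_id s).smul_const (Pi.single j 1 : Fin N → ℝ)).const_add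
    (Function.update x j 0)

lemma hasDerivAt_comp_update {N : ℕ} (ψ : SchwartzMap (Fin N → ℝ) ℂ) (j : Fin N)
    (v : Fin N → ℝ) (t : ℝ) :
    HasDerivAt (fun s => ψ (Function.update v j s))
      (fderiv ℝ (⇑ψ) (Function.update v j t) (Pi.single j 1)) t := by
  have := (ψ.differentiable.differentiableAt.hasFDerivAt).comp_hasDerivAt t
    (hasDerivAt_update' v j t)
  exact this

lemma deriv_update' {N : ℕ} (ψ : SchwartzMap (Fin N → ℝ) ℂ) (j : Fin N) (v : Fin N → ℝ) :
    deriv (fun s => ψ (Function.update v j s)) (v j) = fderiv ℝ (⇑ψ) v (Pi.single j 1) := by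
  have h := hasDerivAt_comp_update ψ j v (v j)
  rw [Function.update_eq_self] at h
  exact h.deriv

/-- Intertwining relations: `(x_j/2 + iħ∂/∂p_j)U_φψ = U_φ(x_jψ)` and
`(p_j/2 − iħ∂/∂x_j)U_φψ = U_φ(−iħ∂ψ/∂x_j)`. -/
theorem wavePacket_intertwining (N : ℕ) (ℏ : ℝ) (hℏ : 0 < ℏ)
    (φ : SchwartzMap (Fin N → ℝ) ℂ) (hφ : ∫ x : Fin N → ℝ, ‖φ x‖ ^ 2 = 1)
    (ψ : SchwartzMap (Fin N → ℝ) ℂ) (j : Fin N) (x p : Fin N → ℝ) :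
    ((x j / 2 : ℝ) * wavePacket N ℏ (⇑φ) (⇑ψ) x p +
        Complex.I * ℏ *
          deriv (fun s => wavePacket N ℏ (⇑φ) (⇑ψ) x (Function.update p j s)) (p j) =
      wavePacket N ℏ (⇑φ) (fun u => (u j : ℂ) * ψ u) x p) ∧
    ((p j / 2 : ℝ) * wavePacket N ℏ (⇑φ) (⇑ψ) x p -
        Complex.I * ℏ *
          deriv (fun s => wavePacket N ℏ (⇑φ) (⇑ψ) (Function.update x j s) p) (x j) =
      wavePacket N ℏ (⇑φ)
        (fun u => -Complex.I * ℏ * deriv (fun s => ψ (Function.update u j s)) (u j)) x p) := by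
  have hne : ℏ ≠ 0 := ne_of_gt hℏ
  have hcne : (ℏ : ℂ) ≠ 0 := Complex.ofReal_ne_zero.mpr hne
  obtain ⟨Mφ, hMφpos, hMφ0⟩ := φ.decay 0 0
  have hMφ : ∀ y, ‖φ y‖ ≤ Mφ := fun y => by
    simpa [norm_iteratedFDeriv_zero] using hMφ0 y
  obtain ⟨Mψ, hMψpos, hMψ0⟩ := ψ.decay 0 0
  have hMψ : ∀ y, ‖ψ y‖ ≤ Mψ := fun y => by
    simpa [norm_iteratedFDeriv_zero] using hMψ0 y
  set c : ℂ := (((2 * Real.pi * ℏ) ^ (-(N : ℝ) / 2) : ℝ) : ℂ) with hc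
  constructor
  · -- PART 1
    set E : ℝ → ℂ :=
      (fun s => ePhase ((s * x j + ∑ i ∈ Finset.univ \ {j}, p i * x i) / (2 * ℏ))) with hE
    set F : ℝ → (Fin N → ℝ) → ℂ := (fun s x' =>
      ePhase (-(s * x' j + ∑ i ∈ Finset.univ \ {j}, p i * x' i) / ℏ) * ψ x' * φ (x - x')) with hF
    set F' : ℝ → (Fin N → ℝ) → ℂ := (fun s x' =>
      ((-(x' j) / ℏ : ℝ) : ℂ) * Complex.I *
        ePhase (-(s * x' j + ∑ i ∈ Finset.univ \ {j}, p i * x' i) / ℏ) * ψ x' *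
        φ (x - x')) with hF'
    have hc1 : ∀ s : ℝ, Continuous fun x' : Fin N → ℝ =>
        -(s * x' j + ∑ i ∈ Finset.univ \ {j}, p i * x' i) / ℏ := fun s =>
      by fun_prop
    have hφc : Continuous fun x' : Fin N → ℝ => φ (x - x') :=
      φ.continuous.comp (continuous_const.sub continuous_id)
    have hFcont : ∀ s, Continuous (F s) := fun s =>
      ((continuous_ePhase_comp (hc1 s)).mul ψ.continuous).mul hφc
    have hF'cont : ∀ s, Continuous (F' s) := fun s =>
      by have := hc1 s; simp only [hF', ePhase] at this ⊢; fun_prop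
    have hFint : Integrable (F (p j)) volume := by
      refine Integrable.mono' ((ψ.integrable (μ := volume)).norm.const_mul Mφ)
        ((hFcont (p j)).aestronglyMeasurable) (Filter.Eventually.of_forall fun x' => ?_)
      simp only [hF]
      rw [norm_mul, norm_mul, norm_ePhase, one_mul]
      calc ‖ψ x'‖ * ‖φ (x - x')‖ ≤ ‖ψ x'‖ * Mφ :=
            mul_le_mul_of_nonneg_left (hMφ _) (norm_nonneg _)
        _ = Mφ * ‖ψ x'‖ := mul_comm _ _
    have hbint : Integrable (fun x' : Fin N → ℝ => (Mφ / ℏ) * (‖x'‖ * ‖ψ x'‖)) volume := by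
      simpa using ((ψ.integrable_pow_mul volume 1).const_mul (Mφ / ℏ))
    have hbound : ∀ x' : Fin N → ℝ, ∀ s ∈ Metric.ball (p j) 1,
        ‖F' s x'‖ ≤ (Mφ / ℏ) * (‖x'‖ * ‖ψ x'‖) := by
      intro x' s _
      simp only [hF', norm_mul, norm_ePhase, Complex.norm_I, Complex.norm_real,
        mul_one, one_mul, Real.norm_eq_abs]
      have habs : |(-(x' j) / ℏ)| = |x' j| / ℏ := by
        rw [abs_div, abs_neg, abs_of_pos hℏ]
      calc |(-(x' j) / ℏ)| * ‖ψ x'‖ * ‖φ (x - x')‖ ≤ (‖x'‖ / ℏ) * ‖ψ x'‖ * Mφ := by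
            rw [habs]
            gcongr
            · simpa [Real.norm_eq_abs] using norm_le_pi_norm x' j
            · exact hMφ _
        _ = (Mφ / ℏ) * (‖x'‖ * ‖ψ x'‖) := by ring
    have hreal : ∀ (x' : Fin N → ℝ) (s : ℝ), HasDerivAt
        (fun t : ℝ => -(t * x' j + ∑ i ∈ Finset.univ \ {j}, p i * x' i) / ℏ)
        (-(x' j) / ℏ) s := by
      intro x' s
      simpa using ((((hasDerivAt_id s).mul_const (x' j)).add_const
        (∑ i ∈ Finset.univ \ {j}, p i * x' i)).neg).div_const ℏ
    have hdiff : ∀ (s : ℝ) (x' : Fin N → ℝ), HasDerivAt (fun t => F t x') (F' s x') s := by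
      intro s x'
      have h := ((ePhase_hasDerivAt (hreal x' s)).mul_const (ψ x')).mul_const (φ (x - x'))
      simp only [hF, hF']
      exact h
    have hder := hasDerivAt_integral_of_dominated_loc_of_deriv_le (μ := volume) (F' := F')
      (bound := fun x' : Fin N → ℝ => (Mφ / ℏ) * (‖x'‖ * ‖ψ x'‖)) (Metric.ball_mem_nhds _ one_pos)
      (Filter.Eventually.of_forall fun s => (hFcont s).aestronglyMeasurable)
      hFint ((hF'cont (p j)).aestronglyMeasurable)
      (Filter.Eventually.of_forall fun x' => hbound x')
      hbint
      (Filter.Eventually.of_forall fun x' s _ => hdiff s x')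
    have hg : HasDerivAt
        (fun s : ℝ => (s * x j + ∑ i ∈ Finset.univ \ {j}, p i * x i) / (2 * ℏ))
        (x j / (2 * ℏ)) (p j) := by
      simpa using (((hasDerivAt_id (p j)).mul_const (x j)).add_const
        (∑ i ∈ Finset.univ \ {j}, p i * x i)).div_const (2 * ℏ)
    have hEd : HasDerivAt E (((x j / (2 * ℏ) : ℝ) : ℂ) * Complex.I * E (p j)) (p j) := by
      have h := ePhase_hasDerivAt hg
      simp only [hE]
      exact h
    have hfun : (fun s => wavePacket N ℏ (⇑φ) (⇑ψ) x (Function.update p j s))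
        = fun s => c * E s * ∫ x', F s x' := by
      funext s
      rw [wavePacket_eq]
      simp only [sum_update_mul_left, hc, hE, hF]
    have hU : wavePacket N ℏ (⇑φ) (⇑ψ) x p = c * E (p j) * ∫ x', F (p j) x' := by
      conv_lhs => rw [show p = Function.update p j (p j) from (Function.update_eq_self j p).symm]
      exact congrFun hfun (p j)
    have hsum2 : ∀ y : Fin N → ℝ,
        (∑ i, p i * y i) = p j * y j + ∑ i ∈ Finset.univ \ {j}, p i * y i := by
      intro y
      have := sum_update_mul_left p y j (p j)
      rwa [Function.update_eq_self] at this
    have hRHS : wavePacket N ℏ (⇑φ) (fun u => ((u j : ℝ) : ℂ) * ψ u) x p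
        = c * E (p j) *
          ∫ x', ePhase (-(p j * x' j + ∑ i ∈ Finset.univ \ {j}, p i * x' i) / ℏ) *
            (((x' j : ℝ) : ℂ) * ψ x') * φ (x - x') := by
      rw [wavePacket_eq]
      simp only [hsum2, hc, hE]
    have hK' : Complex.I * (ℏ : ℂ) * (∫ x', F' (p j) x')
        = ∫ x', ePhase (-(p j * x' j + ∑ i ∈ Finset.univ \ {j}, p i * x' i) / ℏ) *
            (((x' j : ℝ) : ℂ) * ψ x') * φ (x - x') := by
      rw [← integral_const_mul]
      congr 1; funext x'
      simp only [hF']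
      calc Complex.I * (ℏ : ℂ) * (((-(x' j) / ℏ : ℝ) : ℂ) * Complex.I *
            ePhase (-(p j * x' j + ∑ i ∈ Finset.univ \ {j}, p i * x' i) / ℏ) * ψ x' *
            φ (x - x'))
          = (Complex.I * Complex.I) * (((ℏ : ℂ) / (ℏ : ℂ)) * (-((x' j : ℝ) : ℂ)) *
            (ePhase (-(p j * x' j + ∑ i ∈ Finset.univ \ {j}, p i * x' i) / ℏ) * ψ x' *
              φ (x - x'))) := by push_cast; ring
        _ = ePhase (-(p j * x' j + ∑ i ∈ Finset.univ \ {j}, p i * x' i) / ℏ) *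
            (((x' j : ℝ) : ℂ) * ψ x') * φ (x - x') := by
            rw [Complex.I_mul_I, div_self hcne]; ring
    have hD : HasDerivAt (fun s => c * E s * ∫ x', F s x')
        (c * (((x j / (2 * ℏ) : ℝ) : ℂ) * Complex.I * E (p j)) * (∫ x', F (p j) x')
          + c * E (p j) * ∫ x', F' (p j) x') (p j) := (hEd.const_mul c).mul hder.2
    rw [hfun, hD.deriv, hU, hRHS]
    have hmid : Complex.I * (ℏ : ℂ) *
        (c * (((x j / (2 * ℏ) : ℝ) : ℂ) * Complex.I * E (p j)) * (∫ x', F (p j) x'))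
        = -(((x j / 2 : ℝ) : ℂ) * (c * E (p j) * ∫ x', F (p j) x')) := by
      calc Complex.I * (ℏ : ℂ) *
          (c * (((x j / (2 * ℏ) : ℝ) : ℂ) * Complex.I * E (p j)) * (∫ x', F (p j) x'))
          = (Complex.I * Complex.I) * (((ℏ : ℂ) / (ℏ : ℂ)) * (((x j : ℝ) : ℂ) / 2) *
            (c * E (p j) * ∫ x', F (p j) x')) := by push_cast; ring
        _ = -(((x j / 2 : ℝ) : ℂ) * (c * E (p j) * ∫ x', F (p j) x')) := by
            rw [Complex.I_mul_I, div_self hcne]; push_cast; ring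
    linear_combination hmid + (c * E (p j)) * hK'
  · -- PART 2
    set Dψ : SchwartzMap (Fin N → ℝ) ℂ := LineDeriv.lineDerivOpCLM ℝ (SchwartzMap (Fin N → ℝ) ℂ) (Pi.single j (1 : ℝ) : Fin N → ℝ) ψ with hDψ
    obtain ⟨MD, hMDpos, hMD0⟩ := Dψ.decay 0 0
    have hMD : ∀ y, ‖Dψ y‖ ≤ MD := fun y => by
      simpa [norm_iteratedFDeriv_zero] using hMD0 y
    set E2 : ℝ → ℂ :=
      (fun s => ePhase (-(p j * s + ∑ i ∈ Finset.univ \ {j}, p i * x i) / (2 * ℏ))) with hE2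
    set G : ℝ → (Fin N → ℝ) → ℂ := (fun s u =>
      ePhase ((∑ i, p i * u i) / ℏ) * ψ (Function.update x j s - u) * φ u) with hG
    set G' : ℝ → (Fin N → ℝ) → ℂ := (fun s u =>
      ePhase ((∑ i, p i * u i) / ℏ) * Dψ (Function.update x j s - u) * φ u) with hG'
    have hc2 : Continuous fun u : Fin N → ℝ => (∑ i, p i * u i) / ℏ :=
      (continuous_finset_sum _ fun i _ => continuous_const.mul (continuous_apply i)).div_const ℏ
    have hGcont : ∀ s, Continuous (G s) := fun s =>
      ((continuous_ePhase_comp hc2).mul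
        (ψ.continuous.comp (continuous_const.sub continuous_id))).mul φ.continuous
    have hG'cont : ∀ s, Continuous (G' s) := fun s =>
      ((continuous_ePhase_comp hc2).mul
        (Dψ.continuous.comp (continuous_const.sub continuous_id))).mul φ.continuous
    have hGint : Integrable (G (x j)) volume := by
      refine Integrable.mono' ((φ.integrable (μ := volume)).norm.const_mul Mψ)
        ((hGcont (x j)).aestronglyMeasurable) (Filter.Eventually.of_forall fun u => ?_)
      simp only [hG]
      rw [norm_mul, norm_mul, norm_ePhase, one_mul]
      exact mul_le_mul_of_nonneg_right (hMψ _) (norm_nonneg _)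
    have hbint2 : Integrable (fun u : Fin N → ℝ => MD * ‖φ u‖) volume :=
      (φ.integrable (μ := volume)).norm.const_mul MD
    have hbound2 : ∀ u : Fin N → ℝ, ∀ s ∈ Metric.ball (x j) 1,
        ‖G' s u‖ ≤ MD * ‖φ u‖ := by
      intro u s _
      simp only [hG', norm_mul, norm_ePhase, one_mul]
      exact mul_le_mul_of_nonneg_right (hMD _) (norm_nonneg _)
    have hdiff2 : ∀ (s : ℝ) (u : Fin N → ℝ), HasDerivAt (fun t => G t u) (G' s u) s := by
      intro s u
      have h0 : HasDerivAt (fun t : ℝ => Function.update x j t - u) (Pi.single j 1) s :=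
        (hasDerivAt_update' x j s).sub_const u
      have h1 := (ψ.differentiable.differentiableAt.hasFDerivAt).comp_hasDerivAt s h0
      have h2 := (h1.const_mul (ePhase ((∑ i, p i * u i) / ℏ))).mul_const (φ u)
      simp only [hG, hG', hDψ, LineDeriv.lineDerivOpCLM_apply, SchwartzMap.lineDerivOp_apply_eq_fderiv]
      simpa [Function.comp] using h2
    have hder2 := hasDerivAt_integral_of_dominated_loc_of_deriv_le (μ := volume) (F' := G')
      (bound := fun u : Fin N → ℝ => MD * ‖φ u‖) (Metric.ball_mem_nhds _ one_pos)
      (Filter.Eventually.of_forall fun s => (hGcont s).aestronglyMeasurable)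
      hGint ((hG'cont (x j)).aestronglyMeasurable)
      (Filter.Eventually.of_forall fun u => hbound2 u)
      hbint2
      (Filter.Eventually.of_forall fun u s _ => hdiff2 s u)
    have hg2 : HasDerivAt
        (fun s : ℝ => -(p j * s + ∑ i ∈ Finset.univ \ {j}, p i * x i) / (2 * ℏ))
        (-(p j) / (2 * ℏ)) (x j) := by
      simpa using ((((hasDerivAt_id (x j)).const_mul (p j)).add_const
        (∑ i ∈ Finset.univ \ {j}, p i * x i)).neg).div_const (2 * ℏ)
    have hE2d : HasDerivAt E2 (((-(p j) / (2 * ℏ) : ℝ) : ℂ) * Complex.I * E2 (x j)) (x j) := by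
      have h := ePhase_hasDerivAt hg2
      simp only [hE2]
      exact h
    have hfun2 : (fun s => wavePacket N ℏ (⇑φ) (⇑ψ) (Function.update x j s) p)
        = fun s => c * E2 s * ∫ u, G s u := by
      funext s
      rw [wavePacket_eq_conv hne]
      simp only [sum_mul_update, hc, hE2, hG]
    have hU2 : wavePacket N ℏ (⇑φ) (⇑ψ) x p = c * E2 (x j) * ∫ u, G (x j) u := by
      conv_lhs => rw [show x = Function.update x j (x j) from (Function.update_eq_self j x).symm]
      exact congrFun hfun2 (x j)
    have hsum3 : (∑ i, p i * x i) = p j * x j + ∑ i ∈ Finset.univ \ {j}, p i * x i := by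
      have := sum_mul_update x p j (x j)
      rwa [Function.update_eq_self] at this
    have hRHS2 : wavePacket N ℏ (⇑φ)
        (fun u => -Complex.I * (ℏ : ℂ) * deriv (fun s => ψ (Function.update u j s)) (u j)) x p
        = c * E2 (x j) *
          ∫ u, ePhase ((∑ i, p i * u i) / ℏ) *
            (-Complex.I * (ℏ : ℂ) * Dψ (x - u)) * φ u := by
      rw [wavePacket_eq_conv hne]
      simp only [hsum3, hc, hE2, hDψ, LineDeriv.lineDerivOpCLM_apply, SchwartzMap.lineDerivOp_apply_eq_fderiv, deriv_update']
    have hK2' : -Complex.I * (ℏ : ℂ) * (∫ u, G' (x j) u)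
        = ∫ u, ePhase ((∑ i, p i * u i) / ℏ) *
            (-Complex.I * (ℏ : ℂ) * Dψ (x - u)) * φ u := by
      rw [← integral_const_mul]
      congr 1; funext u
      simp only [hG', Function.update_eq_self]
      ring
    have hD2 : HasDerivAt (fun s => c * E2 s * ∫ u, G s u)
        (c * (((-(p j) / (2 * ℏ) : ℝ) : ℂ) * Complex.I * E2 (x j)) * (∫ u, G (x j) u)
          + c * E2 (x j) * ∫ u, G' (x j) u) (x j) := (hE2d.const_mul c).mul hder2.2
    rw [hfun2, hD2.deriv, hU2, hRHS2]
    have hmid2 : Complex.I * (ℏ : ℂ) *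
        (c * (((-(p j) / (2 * ℏ) : ℝ) : ℂ) * Complex.I * E2 (x j)) * (∫ u, G (x j) u))
        = ((p j / 2 : ℝ) : ℂ) * (c * E2 (x j) * ∫ u, G (x j) u) := by
      calc Complex.I * (ℏ : ℂ) *
          (c * (((-(p j) / (2 * ℏ) : ℝ) : ℂ) * Complex.I * E2 (x j)) * (∫ u, G (x j) u))
          = (Complex.I * Complex.I) * (((ℏ : ℂ) / (ℏ : ℂ)) * (-((p j : ℝ) : ℂ) / 2) *
            (c * E2 (x j) * ∫ u, G (x j) u)) := by push_cast; ring
        _ = ((p j / 2 : ℝ) : ℂ) * (c * E2 (x j) * ∫ u, G (x j) u) := by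
            rw [Complex.I_mul_I, div_self hcne]; push_cast; ring
    linear_combination (-1 : ℂ) * hmid2 + (c * E2 (x j)) * hK2'
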